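/- arXiv:1212.1506 — 2 statements merged into one kernel-verified Lean document; each statement's English description precedes it below -/
import Mathlib

section
/- Let N ≥ 1 and λ : ℝ → [0, Λ₀] with c₁Λ₀ ≤ N/2, c₁ > 0, and D(s,t) = exp(c₁∫_s^t λ(ν)dν). Then for all s real, ∫_{max(s,0)}^∞ (1+t)·e^{−Nt}·D(s,t) dt ≤ (2/N)·(1+max(s,0))·e^{−N·max(s,0)}·D(s,max(s,0)) + (4/N²)·e^{−N·max(s,0)}·D(s,max(s,0)). -/
open Real MeasureTheory intervalIntegral Filter Set

lemma aux_tendsto (a : ℝ) (ha : 0 < a) :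
    Tendsto (fun t : ℝ => -(Real.exp (-(a * t)) * ((1 + t) / a + 1 / a ^ 2)))
      atTop (nhds 0) := by
  have hmul : Tendsto (fun t : ℝ => a * t) atTop atTop :=
    Filter.Tendsto.const_mul_atTop ha Filter.tendsto_id
  have h1 : Tendsto (fun t : ℝ => (a * t) * Real.exp (-(a * t))) atTop (nhds 0) := by
    have := (Real.tendsto_pow_mul_exp_neg_atTop_nhds_zero 1).comp hmul
    simpa [Function.comp_def] using this
  have h2 : Tendsto (fun t : ℝ => Real.exp (-(a * t))) atTop (nhds 0) := by
    exact Real.tendsto_exp_neg_atTop_nhds_zero.comp hmul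
  have key : Tendsto (fun t : ℝ =>
      -((1/a) * ((a*t) * Real.exp (-(a*t))) * (1/a)
        + Real.exp (-(a*t)) * (1/a + 1/a^2))) atTop (nhds 0) := by
    have := ((h1.const_mul (1/a)).mul_const (1/a)).add (h2.mul_const (1/a + 1/a^2))
    simpa using this.neg
  refine key.congr (fun t => ?_)
  field_simp
  ring

theorem stmt12 (N Λ₀ c₁ : ℝ) (hN : 1 ≤ N) (l : ℝ → ℝ) (hmeas : Measurable l)
    (h0 : ∀ ν, 0 ≤ l ν) (hb : ∀ ν, l ν ≤ Λ₀) (hc₁ : 0 < c₁)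
    (hsmall : c₁ * Λ₀ ≤ N / 2) (s : ℝ) :
    ∫ t in Set.Ici (max s 0),
        (1 + t) * Real.exp (-N * t) * Real.exp (c₁ * ∫ ν in s..t, l ν)
      ≤ (2 / N) * (1 + max s 0) * Real.exp (-N * max s 0) *
            Real.exp (c₁ * ∫ ν in s..(max s 0), l ν)
        + (4 / N ^ 2) * Real.exp (-N * max s 0) *
            Real.exp (c₁ * ∫ ν in s..(max s 0), l ν) := by
  set m := max s 0 with hm
  have hm0 : 0 ≤ m := le_max_right _ _
  have hN0 : (0 : ℝ) < N := lt_of_lt_of_le one_pos hN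
  set a : ℝ := N / 2 with ha
  have ha0 : 0 < a := by positivity
  -- interval integrability of l
  have hl_int : ∀ u v : ℝ, IntervalIntegrable l volume u v := by
    intro u v
    constructor <;>
      exact (integrable_const Λ₀).mono' hmeas.aestronglyMeasurable.restrict
        (Filter.Eventually.of_forall fun ν => by
          rw [Real.norm_eq_abs, abs_of_nonneg (h0 ν)]; exact hb ν)
  -- antiderivative for (1+t) e^{-a t}
  set F : ℝ → ℝ := fun t => -(Real.exp (-(a * t)) * ((1 + t) / a + 1 / a ^ 2)) with hF
  have hFderiv : ∀ t : ℝ, HasDerivAt F ((1 + t) * Real.exp (-(a * t))) t := by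
    intro t
    have h1 : HasDerivAt (fun t : ℝ => Real.exp (-(a * t))) (-a * Real.exp (-(a * t))) t := by
      have := (Real.hasDerivAt_exp (-(a * t))).comp t
        (((hasDerivAt_id t).const_mul a).neg)
      simpa [mul_comm, Function.comp_def] using this
    have h2 : HasDerivAt (fun t : ℝ => (1 + t) / a + 1 / a ^ 2) (1 / a) t := by
      have h := (((hasDerivAt_id t).const_add (1:ℝ)).div_const a).add_const (1 / a ^ 2)
      simpa [one_div] using h
    have := (h1.mul h2).neg
    exact this.congr_deriv (by linear_combination ((1 + t) * Real.exp (-(a * t)) + Real.exp (-(a * t)) * a⁻¹) * mul_inv_cancel₀ ha0.ne')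
  have hFcont : Continuous F :=
    continuous_iff_continuousAt.mpr fun t => (hFderiv t).continuousAt
  have hFlim : Tendsto F atTop (nhds 0) := aux_tendsto a ha0
  have hg'pos : ∀ x ∈ Ioi m, 0 ≤ (1 + x) * Real.exp (-(a * x)) := by
    intro x hx
    have hx' : m < x := hx
    have : (0:ℝ) ≤ 1 + x := by linarith
    positivity
  -- the dominating function is integrable
  have hdom_int : IntegrableOn (fun t => (1 + t) * Real.exp (-(a * t))) (Ioi m) :=
    integrableOn_Ioi_deriv_of_nonneg hFcont.continuousWithinAt
      (fun x _ => hFderiv x) hg'pos hFlim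
  have hdom_val : ∫ t in Ioi m, (1 + t) * Real.exp (-(a * t)) = 0 - F m :=
    integral_Ioi_of_hasDerivAt_of_nonneg hFcont.continuousWithinAt
      (fun x _ => hFderiv x) hg'pos hFlim
  -- constant factor
  set C : ℝ := Real.exp (-(a * m)) * Real.exp (c₁ * ∫ ν in s..m, l ν) with hC
  have hC0 : 0 ≤ C := by positivity
  -- pointwise bound
  have hpt : ∀ t ∈ Ici m,
      (1 + t) * Real.exp (-N * t) * Real.exp (c₁ * ∫ ν in s..t, l ν)
        ≤ C * ((1 + t) * Real.exp (-(a * t))) := by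
    intro t ht
    have htm : m ≤ t := ht
    have ht0 : (0:ℝ) ≤ 1 + t := by have := hm0.trans htm; linarith
    have hsplit : (∫ ν in s..t, l ν) = (∫ ν in s..m, l ν) + ∫ ν in m..t, l ν :=
      (integral_add_adjacent_intervals (hl_int s m) (hl_int m t)).symm
    have hmono : (∫ ν in m..t, l ν) ≤ Λ₀ * (t - m) := by
      have := intervalIntegral.integral_mono_on htm (hl_int m t)
        intervalIntegrable_const (fun x _ => hb x)
      simpa [intervalIntegral.integral_const, smul_eq_mul, mul_comm] using this
    have hΛ0 : 0 ≤ Λ₀ := (h0 0).trans (hb 0)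
    have hexp : Real.exp (c₁ * ∫ ν in s..t, l ν)
        ≤ Real.exp (c₁ * ∫ ν in s..m, l ν) * Real.exp (a * (t - m)) := by
      rw [← Real.exp_add]
      apply Real.exp_le_exp.mpr
      have h1 : c₁ * ∫ ν in m..t, l ν ≤ a * (t - m) := by
        calc c₁ * ∫ ν in m..t, l ν ≤ c₁ * (Λ₀ * (t - m)) :=
              mul_le_mul_of_nonneg_left hmono hc₁.le
          _ = (c₁ * Λ₀) * (t - m) := by ring
          _ ≤ a * (t - m) := mul_le_mul_of_nonneg_right hsmall (by linarith)
      rw [hsplit]; linarith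
    calc (1 + t) * Real.exp (-N * t) * Real.exp (c₁ * ∫ ν in s..t, l ν)
        ≤ (1 + t) * Real.exp (-N * t) *
            (Real.exp (c₁ * ∫ ν in s..m, l ν) * Real.exp (a * (t - m))) := by
          apply mul_le_mul_of_nonneg_left hexp
          positivity
      _ = C * ((1 + t) * Real.exp (-(a * t))) := by
          rw [hC]
          have key : Real.exp (-N * t) *
              (Real.exp (c₁ * ∫ ν in s..m, l ν) * Real.exp (a * (t - m)))
              = Real.exp (-(a * m)) * Real.exp (c₁ * ∫ ν in s..m, l ν) *
                Real.exp (-(a * t)) := by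
            rw [← Real.exp_add, ← Real.exp_add, ← Real.exp_add, ← Real.exp_add]
            congr 1
            rw [ha]; ring
          rw [mul_assoc, key]; ring
  -- integrability of LHS
  have hcontp : Continuous fun t => ∫ ν in s..t, l ν :=
    intervalIntegral.continuous_primitive (fun u v => hl_int u v) s
  have hlhs_meas : AEStronglyMeasurable
      (fun t => (1 + t) * Real.exp (-N * t) * Real.exp (c₁ * ∫ ν in s..t, l ν))
      (volume.restrict (Ici m)) := by
    have hcont : Continuous
        (fun t : ℝ => (1 + t) * Real.exp (-N * t) * Real.exp (c₁ * ∫ ν in s..t, l ν)) := by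
      refine ((continuous_const.add continuous_id).mul
        (Real.continuous_exp.comp (continuous_const.mul continuous_id))).mul
        (Real.continuous_exp.comp (continuous_const.mul hcontp))
    exact hcont.aestronglyMeasurable
  have hrhs_int : IntegrableOn (fun t => C * ((1 + t) * Real.exp (-(a * t)))) (Ici m) := by
    rw [integrableOn_Ici_iff_integrableOn_Ioi]
    exact hdom_int.const_mul C
  have hlhs_int : IntegrableOn
      (fun t => (1 + t) * Real.exp (-N * t) * Real.exp (c₁ * ∫ ν in s..t, l ν))
      (Ici m) := by
    apply hrhs_int.mono' hlhs_meas
    rw [ae_restrict_iff' measurableSet_Ici]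
    refine Filter.Eventually.of_forall fun t ht => ?_
    have ht0 : (0:ℝ) ≤ 1 + t := by have := hm0.trans ht.out; linarith
    rw [Real.norm_eq_abs, abs_of_nonneg (by positivity)]
    exact hpt t ht
  -- combine
  have hmono : (∫ t in Ici m,
        (1 + t) * Real.exp (-N * t) * Real.exp (c₁ * ∫ ν in s..t, l ν))
      ≤ ∫ t in Ici m, C * ((1 + t) * Real.exp (-(a * t))) :=
    setIntegral_mono_on hlhs_int hrhs_int measurableSet_Ici hpt
  have hrhs_eq : (∫ t in Ici m, C * ((1 + t) * Real.exp (-(a * t))))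
      = C * (0 - F m) := by
    rw [← hdom_val, ← MeasureTheory.integral_const_mul]
    rw [setIntegral_congr_set Ioi_ae_eq_Ici.symm]
  refine hmono.trans ?_
  rw [hrhs_eq, hC, hF]
  have hexpm : Real.exp (-(a * m)) * Real.exp (-(a * m)) = Real.exp (-N * m) := by
    rw [← Real.exp_add]; congr 1; rw [ha]; ring
  have h2a : 1 / a = 2 / N := by rw [ha, one_div_div]
  have h4a : 1 / a ^ 2 = 4 / N ^ 2 := by rw [ha, div_pow, one_div_div]; norm_num
  have hrw : Real.exp (-(a * m)) * Real.exp (c₁ * ∫ ν in s..m, l ν) *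
      (0 - -(Real.exp (-(a * m)) * ((1 + m) / a + 1 / a ^ 2)))
      = (Real.exp (-(a * m)) * Real.exp (-(a * m))) *
        Real.exp (c₁ * ∫ ν in s..m, l ν) * ((1 + m) * (1/a) + 1 / a ^ 2) := by
    ring
  rw [hrw, hexpm, h2a, h4a]
  apply le_of_eq
  ring
end

section
/- Let g : [0,∞) → [0,∞) be measurable, 0 < a ≤ b ≤ ∞, and u : ℝ^N → ℝ locally integrable. Then ∫_{a≤|y|≤b} (∫_{|y|/2}^{|y|} g(ρ) dρ/ρ)·|u(y)| dy ≤ ∫_{a/2}^{b} g(ρ)·(∫_{ρ≤|y|<2ρ} |u(y)| dy) dρ/ρ. -/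
open Real MeasureTheory ENNReal

theorem stmt19 (N : ℕ) (hN : 1 ≤ N) (g : ℝ → ℝ) (hg : Measurable g)
    (hg0 : ∀ ρ, 0 ≤ g ρ) (u : EuclideanSpace ℝ (Fin N) → ℝ)
    (hu : MeasureTheory.LocallyIntegrable u volume)
    (a : ℝ) (b : ℝ≥0∞) (ha : 0 < a) (hab : ENNReal.ofReal a ≤ b) :
    (∫⁻ y in {y : EuclideanSpace ℝ (Fin N) | a ≤ ‖y‖ ∧ (‖y‖₊ : ℝ≥0∞) ≤ b},
        (∫⁻ ρ in Set.Ioc (‖y‖ / 2) ‖y‖, ENNReal.ofReal (g ρ / ρ)) *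
          ENNReal.ofReal |u y|)
      ≤ ∫⁻ ρ in {ρ : ℝ | a / 2 ≤ ρ ∧ ENNReal.ofReal ρ ≤ b},
          ENNReal.ofReal (g ρ / ρ) *
            ∫⁻ y in {y : EuclideanSpace ℝ (Fin N) | ρ ≤ ‖y‖ ∧ ‖y‖ < 2 * ρ},
              ENNReal.ofReal |u y| := by
  classical
  have hum : AEMeasurable u volume := hu.aestronglyMeasurable.aemeasurable
  set v := hum.mk u with hv_def
  have hv : Measurable v := hum.measurable_mk
  have huv : u =ᵐ[volume] v := hum.ae_eq_mk
  set f : ℝ → ℝ≥0∞ := fun ρ => ENNReal.ofReal (g ρ / ρ) with hf_def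
  have hf : Measurable f := ENNReal.measurable_ofReal.comp (hg.div measurable_id)
  set F : EuclideanSpace ℝ (Fin N) → ℝ≥0∞ := fun y => ENNReal.ofReal |v y| with hF_def
  have hF : Measurable F := ENNReal.measurable_ofReal.comp hv.abs
  set A : Set (EuclideanSpace ℝ (Fin N)) := {y | a ≤ ‖y‖ ∧ (‖y‖₊ : ℝ≥0∞) ≤ b} with hA_def
  have hAmeas : MeasurableSet A := by
    have h1 : MeasurableSet {y : EuclideanSpace ℝ (Fin N) | a ≤ ‖y‖} :=
      measurableSet_le measurable_const measurable_norm
    have h2 : MeasurableSet {y : EuclideanSpace ℝ (Fin N) | (‖y‖₊ : ℝ≥0∞) ≤ b} :=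
      (measurable_coe_nnreal_ennreal.comp measurable_nnnorm) measurableSet_Iic
    exact h1.inter h2
  set R : Set ℝ := {ρ : ℝ | a / 2 ≤ ρ ∧ ENNReal.ofReal ρ ≤ b} with hR_def
  have hRmeas : MeasurableSet R := by
    have h1 : MeasurableSet {ρ : ℝ | a / 2 ≤ ρ} := measurableSet_le measurable_const measurable_id
    have h2 : MeasurableSet {ρ : ℝ | ENNReal.ofReal ρ ≤ b} :=
      ENNReal.measurable_ofReal measurableSet_Iic
    exact h1.inter h2
  set S : ℝ → Set (EuclideanSpace ℝ (Fin N)) :=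
    fun ρ => {y | ρ ≤ ‖y‖ ∧ ‖y‖ < 2 * ρ} with hS_def
  set T : Set (ℝ × EuclideanSpace ℝ (Fin N)) :=
    {p | ‖p.2‖ / 2 < p.1 ∧ p.1 ≤ ‖p.2‖ ∧ a ≤ ‖p.2‖ ∧ (‖p.2‖₊ : ℝ≥0∞) ≤ b} with hT_def
  have hn : Measurable fun p : ℝ × EuclideanSpace ℝ (Fin N) => ‖p.2‖ :=
    measurable_norm.comp measurable_snd
  have hTmeas : MeasurableSet T :=
    (measurableSet_lt (hn.div_const 2) measurable_fst).inter
      ((measurableSet_le measurable_fst hn).inter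
        ((measurableSet_le measurable_const hn).inter
          (((measurable_coe_nnreal_ennreal.comp measurable_nnnorm).comp measurable_snd)
            measurableSet_Iic)))
  set H : ℝ × EuclideanSpace ℝ (Fin N) → ℝ≥0∞ :=
    T.indicator (fun p => f p.1 * F p.2) with hH_def
  have hH : Measurable H :=
    ((hf.comp measurable_fst).mul (hF.comp measurable_snd)).indicator hTmeas
  -- replace u by v on the left
  have hL : (∫⁻ y in A, (∫⁻ ρ in Set.Ioc (‖y‖ / 2) ‖y‖, f ρ) * ENNReal.ofReal |u y|)
      = ∫⁻ y in A, (∫⁻ ρ in Set.Ioc (‖y‖ / 2) ‖y‖, f ρ) * F y := by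
    refine lintegral_congr_ae (ae_restrict_of_ae ?_)
    filter_upwards [huv] with y hy
    rw [hF_def]; simp only [hy]
  -- replace u by v on the right
  have hR : (∫⁻ ρ in R, f ρ * ∫⁻ y in S ρ, ENNReal.ofReal |u y|)
      = ∫⁻ ρ in R, f ρ * ∫⁻ y in S ρ, F y := by
    refine lintegral_congr fun ρ => ?_
    congr 1
    refine lintegral_congr_ae (ae_restrict_of_ae ?_)
    filter_upwards [huv] with y hy
    rw [hF_def]; simp only [hy]
  rw [hL, hR]
  -- step 1: write LHS as an iterated integral of H
  have step1 : (∫⁻ y in A, (∫⁻ ρ in Set.Ioc (‖y‖ / 2) ‖y‖, f ρ) * F y)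
      = ∫⁻ y, ∫⁻ ρ, H (ρ, y) := by
    rw [← lintegral_indicator hAmeas]
    refine lintegral_congr fun y => ?_
    by_cases hy : y ∈ A
    · rw [Set.indicator_of_mem hy]
      have hpt : ∀ ρ, H (ρ, y) = (Set.Ioc (‖y‖ / 2) ‖y‖).indicator f ρ * F y := by
        intro ρ
        by_cases hρ : ρ ∈ Set.Ioc (‖y‖ / 2) ‖y‖
        · rw [Set.indicator_of_mem hρ, hH_def, Set.indicator_of_mem]
          exact ⟨hρ.1, hρ.2, hy.1, hy.2⟩
        · rw [Set.indicator_of_notMem hρ, zero_mul, hH_def, Set.indicator_of_notMem]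
          intro hmem; exact hρ ⟨hmem.1, hmem.2.1⟩
      simp only [hpt]
      rw [lintegral_mul_const _ (hf.indicator measurableSet_Ioc),
        lintegral_indicator measurableSet_Ioc]
    · rw [Set.indicator_of_notMem hy]
      have hpt : ∀ ρ, H (ρ, y) = 0 := by
        intro ρ
        rw [hH_def]
        exact Set.indicator_of_notMem (fun hmem => hy ⟨hmem.2.2.1, hmem.2.2.2⟩) _
      simp [hpt]
  -- step 2: Tonelli
  have hH' : AEMeasurable (Function.uncurry fun ρ (y : EuclideanSpace ℝ (Fin N)) => H (ρ, y))
      (volume.prod volume) := hH.aemeasurable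
  have step2 : (∫⁻ y, ∫⁻ ρ, H (ρ, y)) = ∫⁻ ρ, ∫⁻ y, H (ρ, y) :=
    (lintegral_lintegral_swap hH').symm
  rw [step1, step2, ← lintegral_indicator hRmeas]
  -- step 3: pointwise bound in ρ
  refine lintegral_mono fun ρ => ?_
  by_cases hρ : ρ ∈ R
  · rw [Set.indicator_of_mem hρ]
    set Tρ : Set (EuclideanSpace ℝ (Fin N)) :=
      {y | ‖y‖ / 2 < ρ ∧ ρ ≤ ‖y‖ ∧ a ≤ ‖y‖ ∧ (‖y‖₊ : ℝ≥0∞) ≤ b} with hTρ_def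
    have hTρmeas : MeasurableSet Tρ := by
      have h1 : MeasurableSet {y : EuclideanSpace ℝ (Fin N) | ‖y‖ / 2 < ρ} :=
        measurableSet_lt (measurable_norm.div_const 2) measurable_const
      have h2 : MeasurableSet {y : EuclideanSpace ℝ (Fin N) | ρ ≤ ‖y‖} :=
        measurableSet_le measurable_const measurable_norm
      have h3 : MeasurableSet {y : EuclideanSpace ℝ (Fin N) | a ≤ ‖y‖} :=
        measurableSet_le measurable_const measurable_norm
      have h4 : MeasurableSet {y : EuclideanSpace ℝ (Fin N) | (‖y‖₊ : ℝ≥0∞) ≤ b} :=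
        (measurable_coe_nnreal_ennreal.comp measurable_nnnorm) measurableSet_Iic
      exact h1.inter (h2.inter (h3.inter h4))
    have hpt : ∀ y, H (ρ, y) = Tρ.indicator (fun y => f ρ * F y) y := by
      intro y
      by_cases hy : y ∈ Tρ
      · rw [Set.indicator_of_mem hy, hH_def, Set.indicator_of_mem]
        exact hy
      · rw [Set.indicator_of_notMem hy, hH_def, Set.indicator_of_notMem]
        exact fun hmem => hy hmem
    calc (∫⁻ y, H (ρ, y)) = ∫⁻ y in Tρ, f ρ * F y := by
          simp only [hpt]; rw [lintegral_indicator hTρmeas]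
      _ = f ρ * ∫⁻ y in Tρ, F y := lintegral_const_mul _ hF
      _ ≤ f ρ * ∫⁻ y in S ρ, F y := by
          refine mul_le_mul_right (lintegral_mono_set ?_) _
          intro y hy
          refine ⟨hy.2.1, ?_⟩
          have := hy.1
          linarith
  · rw [Set.indicator_of_notMem hρ]
    have hpt : ∀ y, H (ρ, y) = 0 := by
      intro y
      rw [hH_def]
      refine Set.indicator_of_notMem ?_ _
      rintro ⟨h1, h2, h3, h4⟩
      rw [hR_def] at hρ
      simp only [Set.mem_setOf_eq, not_and, not_le] at hρ
      rcases le_or_gt (a / 2) ρ with hcase | hcase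
      · have hb : b < ENNReal.ofReal ρ := hρ hcase
        have : ENNReal.ofReal ρ ≤ (‖y‖₊ : ℝ≥0∞) := by
          rw [← ENNReal.ofReal_coe_nnreal, coe_nnnorm]
          exact ENNReal.ofReal_le_ofReal h2
        exact absurd (this.trans h4) (not_le.mpr hb)
      · have : a / 2 ≤ ‖y‖ / 2 := by linarith
        linarith
    simp [hpt]
end
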